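/- Let (𝔥,𝔅,𝔅†) be a C*-base (𝔅 and 𝔅† commuting nondegenerate C*-subalgebras of L(𝔥)) and α a C*-factorization of a Hilbert space H with respect to it. Then there exists a unique representation ρ_α : 𝔅† → L(H) such that ρ_α(b†)(ξζ) = ξ(b†ζ) for all b† ∈ 𝔅†, ξ ∈ α, ζ ∈ 𝔥, and this representation is faithful and nondegenerate. -/

import Mathlib

noncomputable section
open ContinuousLinearMap
open scoped InnerProductSpace TensorProduct

/-- Closed linear span of a subset of a complex normed space. -/
def clspan {E : Type*} [NormedAddCommGroup E] [NormedSpace ℂ E] (S : Set E) : Set E :=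
  ((Submodule.span ℂ S).topologicalClosure : Set E)

lemma clspan_subset' {E : Type*} [NormedAddCommGroup E] [NormedSpace ℂ E] {S : Set E}
    (hS : clspan S = S) {x : E} (hx : x ∈ Submodule.span ℂ S) : x ∈ S := by
  have : x ∈ clspan S := by
    unfold clspan
    rw [Submodule.topologicalClosure_coe]
    exact subset_closure hx
  rwa [hS] at this

lemma real_iter {r s K u : ℝ} (hr : 0 ≤ r) (hs : 0 ≤ s) (hK : 0 ≤ K) (hu : 0 ≤ u)
    (h : ∀ n : ℕ, r ^ (2 ^ n) ≤ s ^ (2 ^ n - 1) * (K * u ^ (2 ^ n))) : r ≤ s * u := by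
  by_contra hc
  push_neg at hc
  have hr0 : 0 < r := lt_of_le_of_lt (mul_nonneg hs hu) hc
  rcases hs.eq_or_lt with hs0 | hs0
  · have h1 := h 1
    rw [← hs0] at h1
    norm_num at h1
    nlinarith
  rcases hu.eq_or_lt with hu0 | hu0
  · have h1 := h 1
    rw [← hu0] at h1
    norm_num at h1
    nlinarith
  set q := r / (s * u) with hqdef
  have hsu : 0 < s * u := mul_pos hs0 hu0
  have hq1 : 1 < q := (one_lt_div hsu).2 hc
  have key : ∀ n : ℕ, q ^ (2 ^ n) ≤ K / s := by
    intro n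
    have h2 : 1 ≤ 2 ^ n := Nat.one_le_two_pow
    have hru : r = q * (s * u) := by rw [hqdef]; field_simp
    have hn := h n
    rw [hru, mul_pow, mul_pow] at hn
    have hsplit : s ^ (2 ^ n) = s ^ (2 ^ n - 1) * s := by
      rw [← pow_succ]
      congr 1
      omega
    rw [hsplit] at hn
    have huN : 0 < u ^ (2 ^ n) := pow_pos hu0 _
    have hsN : 0 < s ^ (2 ^ n - 1) := pow_pos hs0 _
    have h' : q ^ (2 ^ n) * s ≤ K := by
      have hpos : 0 < s ^ (2 ^ n - 1) * u ^ (2 ^ n) := mul_pos hsN huN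
      apply le_of_mul_le_mul_right _ hpos
      calc q ^ (2 ^ n) * s * (s ^ (2 ^ n - 1) * u ^ (2 ^ n))
          = q ^ (2 ^ n) * (s ^ (2 ^ n - 1) * s * u ^ (2 ^ n)) := by ring
        _ ≤ s ^ (2 ^ n - 1) * (K * u ^ (2 ^ n)) := hn
        _ = K * (s ^ (2 ^ n - 1) * u ^ (2 ^ n)) := by ring
    exact (le_div_iff₀ hs0).2 h'
  obtain ⟨m, hm⟩ := pow_unbounded_of_one_lt (K / s) hq1
  have hmono : q ^ m ≤ q ^ (2 ^ m) :=
    pow_le_pow_right₀ hq1.le (Nat.le_of_lt (Nat.lt_two_pow_self))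
  linarith [key m]

section Main

variable {𝔥 H : Type*} [NormedAddCommGroup 𝔥] [InnerProductSpace ℂ 𝔥] [CompleteSpace 𝔥]
  [NormedAddCommGroup H] [InnerProductSpace ℂ H] [CompleteSpace H]

/-- The auxiliary linear map `ξ ⊗ ζ ↦ ξ (c ζ)`. -/
def Phi (c : 𝔥 →L[ℂ] 𝔥) : ((𝔥 →L[ℂ] H) ⊗[ℂ] 𝔥) →ₗ[ℂ] H :=
  TensorProduct.lift (LinearMap.mk₂ ℂ (fun ξ ζ => ξ (c ζ))
    (fun ξ ξ' ζ => by simp) (fun a ξ ζ => by simp) (fun ξ ζ ζ' => by simp)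
    (fun a ξ ζ => by simp))

@[simp] lemma Phi_tmul (c : 𝔥 →L[ℂ] 𝔥) (ξ : 𝔥 →L[ℂ] H) (ζ : 𝔥) :
    Phi c (ξ ⊗ₜ[ℂ] ζ) = ξ (c ζ) := rfl

lemma Phi_crude (t : (𝔥 →L[ℂ] H) ⊗[ℂ] 𝔥) :
    ∃ K : ℝ, 0 ≤ K ∧ ∀ c : 𝔥 →L[ℂ] 𝔥, ‖Phi c t‖ ≤ K * ‖c‖ := by
  induction t with
  | zero => exact ⟨0, le_refl 0, fun c => by simp⟩
  | tmul ξ ζ =>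
    refine ⟨‖ξ‖ * ‖ζ‖, by positivity, fun c => ?_⟩
    calc ‖Phi c (ξ ⊗ₜ[ℂ] ζ)‖ = ‖ξ (c ζ)‖ := by rw [Phi_tmul]
      _ ≤ ‖ξ‖ * ‖c ζ‖ := le_opNorm ξ (c ζ)
      _ ≤ ‖ξ‖ * (‖c‖ * ‖ζ‖) := by
          gcongr
          exact le_opNorm c ζ
      _ = ‖ξ‖ * ‖ζ‖ * ‖c‖ := by ring
  | add x y hx hy =>
    obtain ⟨K1, h1, hx⟩ := hx
    obtain ⟨K2, h2, hy⟩ := hy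
    refine ⟨K1 + K2, by positivity, fun c => ?_⟩
    calc ‖Phi c (x + y)‖ = ‖Phi c x + Phi c y‖ := by rw [map_add]
      _ ≤ ‖Phi c x‖ + ‖Phi c y‖ := norm_add_le _ _
      _ ≤ K1 * ‖c‖ + K2 * ‖c‖ := add_le_add (hx c) (hy c)
      _ = (K1 + K2) * ‖c‖ := by ring

/-- Generators of the tensor algebra subspace. -/
def genSet (α : Set (𝔥 →L[ℂ] H)) : Set ((𝔥 →L[ℂ] H) ⊗[ℂ] 𝔥) :=
  {t | ∃ ξ ∈ α, ∃ ζ : 𝔥, ξ ⊗ₜ[ℂ] ζ = t}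

lemma subset_clspan {E : Type*} [NormedAddCommGroup E] [NormedSpace ℂ E] (S : Set E) :
    S ⊆ clspan S := by
  intro x hx
  unfold clspan
  rw [Submodule.topologicalClosure_coe]
  exact subset_closure (Submodule.subset_span hx)

lemma inner_id {𝔅 𝔅d : Set (𝔥 →L[ℂ] 𝔥)} {α : Set (𝔥 →L[ℂ] H)}
    (hαα : clspan (Set.image2 (fun (ξ ξ' : 𝔥 →L[ℂ] H) => adjoint ξ ∘L ξ') α α) = 𝔅)
    (hcomm : ∀ b ∈ 𝔅, ∀ c ∈ 𝔅d, b ∘L c = c ∘L b)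
    {b : 𝔥 →L[ℂ] 𝔥} (hb : adjoint b ∈ 𝔅d) (c : 𝔥 →L[ℂ] 𝔥)
    {t t' : (𝔥 →L[ℂ] H) ⊗[ℂ] 𝔥}
    (ht : t ∈ Submodule.span ℂ (genSet α)) (ht' : t' ∈ Submodule.span ℂ (genSet α)) :
    ⟪Phi b t, Phi c t'⟫_ℂ = ⟪Phi 1 t, Phi (adjoint b ∘L c) t'⟫_ℂ := by
  refine Submodule.span_induction (p := fun t _ => ∀ t',
      t' ∈ Submodule.span ℂ (genSet α) →
      ⟪Phi b t, Phi c t'⟫_ℂ = ⟪Phi 1 t, Phi (adjoint b ∘L c) t'⟫_ℂ)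
    ?_ ?_ ?_ ?_ ht t' ht'
  · rintro x ⟨ξ, hξ, ζ, rfl⟩ t' ht'
    refine Submodule.span_induction (p := fun t' _ =>
        ⟪Phi b (ξ ⊗ₜ[ℂ] ζ), Phi c t'⟫_ℂ = ⟪Phi 1 (ξ ⊗ₜ[ℂ] ζ), Phi (adjoint b ∘L c) t'⟫_ℂ)
      ?_ ?_ ?_ ?_ ht'
    · rintro y ⟨ξ', hξ', ζ', rfl⟩
      simp only [Phi_tmul, one_apply, comp_apply]
      have hmemB : adjoint ξ ∘L ξ' ∈ 𝔅 := by
        rw [← hαα]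
        exact subset_clspan _ (Set.mem_image2_of_mem hξ hξ')
      have hcm := hcomm _ hmemB _ hb
      have hcm' : adjoint b ((adjoint ξ) (ξ' (c ζ'))) = (adjoint ξ) (ξ' (adjoint b (c ζ'))) := by
        have := congrArg (fun (T : 𝔥 →L[ℂ] 𝔥) => T (c ζ')) hcm
        simpa using this.symm
      calc ⟪ξ (b ζ), ξ' (c ζ')⟫_ℂ
          = ⟪b ζ, adjoint ξ (ξ' (c ζ'))⟫_ℂ := (adjoint_inner_right ξ _ _).symm
        _ = ⟪ζ, adjoint b (adjoint ξ (ξ' (c ζ')))⟫_ℂ := (adjoint_inner_right b _ _).symm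
        _ = ⟪ζ, adjoint ξ (ξ' (adjoint b (c ζ')))⟫_ℂ := by rw [hcm']
        _ = ⟪ξ ζ, ξ' (adjoint b (c ζ'))⟫_ℂ := adjoint_inner_right ξ _ _
    · simp
    · intro x y _ _ hx hy
      rw [map_add, map_add, inner_add_right, inner_add_right, hx, hy]
    · intro a x _ hx
      rw [map_smul, map_smul, inner_smul_right, inner_smul_right, hx]
  · intro t' _
    simp
  · intro x y _ _ hx hy t' ht'
    rw [map_add, map_add, inner_add_left, inner_add_left, hx t' ht', hy t' ht']
  · intro a x _ hx t' ht'
    rw [map_smul, map_smul, inner_smul_left, inner_smul_left, hx t' ht']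

lemma cs_step {𝔅 𝔅d : Set (𝔥 →L[ℂ] 𝔥)} {α : Set (𝔥 →L[ℂ] H)}
    (hαα : clspan (Set.image2 (fun (ξ ξ' : 𝔥 →L[ℂ] H) => adjoint ξ ∘L ξ') α α) = 𝔅)
    (hcomm : ∀ b ∈ 𝔅, ∀ c ∈ 𝔅d, b ∘L c = c ∘L b)
    {b : 𝔥 →L[ℂ] 𝔥} (hb : adjoint b ∈ 𝔅d)
    {t : (𝔥 →L[ℂ] H) ⊗[ℂ] 𝔥} (ht : t ∈ Submodule.span ℂ (genSet α)) :
    ‖Phi b t‖ ^ 2 ≤ ‖Phi 1 t‖ * ‖Phi (adjoint b ∘L b) t‖ := by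
  have hid := inner_id hαα hcomm hb b ht ht
  have h1 : (⟪Phi b t, Phi b t⟫_ℂ) = ((‖Phi b t‖ : ℂ)) ^ 2 := inner_self_eq_norm_sq_to_K _
  calc ‖Phi b t‖ ^ 2 = ‖((‖Phi b t‖ : ℂ)) ^ 2‖ := by
        rw [norm_pow, Complex.norm_real, norm_norm]
    _ = ‖⟪Phi 1 t, Phi (adjoint b ∘L b) t⟫_ℂ‖ := by rw [← h1, hid]
    _ ≤ ‖Phi 1 t‖ * ‖Phi (adjoint b ∘L b) t‖ := norm_inner_le_norm _ _

lemma pow_mem' {𝔅d : Set (𝔥 →L[ℂ] 𝔥)}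
    (h𝔅dmul : ∀ b ∈ 𝔅d, ∀ b' ∈ 𝔅d, b ∘L b' ∈ 𝔅d)
    {d : 𝔥 →L[ℂ] 𝔥} (hd : d ∈ 𝔅d) : ∀ n : ℕ, 1 ≤ n → d ^ n ∈ 𝔅d := by
  intro n
  induction n with
  | zero => omega
  | succ n ih =>
    intro _
    rcases Nat.eq_zero_or_pos n with h0 | h0
    · subst h0; simpa [pow_one] using hd
    · have : d ^ (n + 1) = d ∘L d ^ n := by rw [← ContinuousLinearMap.mul_def, ← pow_succ']
      rw [this]
      exact h𝔅dmul _ hd _ (ih h0)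

lemma iter_bound {𝔅 𝔅d : Set (𝔥 →L[ℂ] 𝔥)} {α : Set (𝔥 →L[ℂ] H)}
    (hαα : clspan (Set.image2 (fun (ξ ξ' : 𝔥 →L[ℂ] H) => adjoint ξ ∘L ξ') α α) = 𝔅)
    (hcomm : ∀ b ∈ 𝔅, ∀ c ∈ 𝔅d, b ∘L c = c ∘L b)
    (h𝔅dmul : ∀ b ∈ 𝔅d, ∀ b' ∈ 𝔅d, b ∘L b' ∈ 𝔅d)
    {d : 𝔥 →L[ℂ] 𝔥} (hd : d ∈ 𝔅d) (hsa : adjoint d = d)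
    {t : (𝔥 →L[ℂ] H) ⊗[ℂ] 𝔥} (ht : t ∈ Submodule.span ℂ (genSet α)) :
    ∀ n : ℕ, ‖Phi d t‖ ^ (2 ^ n) ≤ ‖Phi 1 t‖ ^ (2 ^ n - 1) * ‖Phi (d ^ (2 ^ n)) t‖ := by
  intro n
  induction n with
  | zero => simp
  | succ n ih =>
    have h2 : 1 ≤ 2 ^ n := Nat.one_le_two_pow
    have hdk : d ^ (2 ^ n) ∈ 𝔅d := pow_mem' h𝔅dmul hd _ h2
    have hdk_sa : adjoint (d ^ (2 ^ n)) = d ^ (2 ^ n) := by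
      rw [← star_eq_adjoint, star_pow, star_eq_adjoint, hsa]
    have hdk' : adjoint (d ^ (2 ^ n)) ∈ 𝔅d := by rw [hdk_sa]; exact hdk
    have hcs := cs_step hαα hcomm hdk' ht
    have hpow : adjoint (d ^ (2 ^ n)) ∘L d ^ (2 ^ n) = d ^ (2 ^ (n + 1)) := by
      rw [hdk_sa, ← ContinuousLinearMap.mul_def, ← pow_add]
      congr 1
      rw [pow_succ]
      ring
    rw [hpow] at hcs
    calc ‖Phi d t‖ ^ (2 ^ (n + 1)) = (‖Phi d t‖ ^ (2 ^ n)) ^ 2 := by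
          rw [← pow_mul, pow_succ]
      _ ≤ (‖Phi 1 t‖ ^ (2 ^ n - 1) * ‖Phi (d ^ (2 ^ n)) t‖) ^ 2 := by
          gcongr
      _ = ‖Phi 1 t‖ ^ ((2 ^ n - 1) * 2) * ‖Phi (d ^ (2 ^ n)) t‖ ^ 2 := by
          rw [mul_pow, ← pow_mul]
      _ ≤ ‖Phi 1 t‖ ^ ((2 ^ n - 1) * 2) * (‖Phi 1 t‖ * ‖Phi (d ^ (2 ^ (n + 1))) t‖) := by
          gcongr
      _ = ‖Phi 1 t‖ ^ ((2 ^ n - 1) * 2 + 1) * ‖Phi (d ^ (2 ^ (n + 1))) t‖ := by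
          rw [pow_succ]
          ring
      _ = ‖Phi 1 t‖ ^ (2 ^ (n + 1) - 1) * ‖Phi (d ^ (2 ^ (n + 1))) t‖ := by
          congr 2
          have h2' : 2 ^ (n + 1) = 2 * 2 ^ n := by rw [pow_succ]; ring
          omega

lemma bound_sa {𝔅 𝔅d : Set (𝔥 →L[ℂ] 𝔥)} {α : Set (𝔥 →L[ℂ] H)}
    (hαα : clspan (Set.image2 (fun (ξ ξ' : 𝔥 →L[ℂ] H) => adjoint ξ ∘L ξ') α α) = 𝔅)
    (hcomm : ∀ b ∈ 𝔅, ∀ c ∈ 𝔅d, b ∘L c = c ∘L b)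
    (h𝔅dmul : ∀ b ∈ 𝔅d, ∀ b' ∈ 𝔅d, b ∘L b' ∈ 𝔅d)
    {d : 𝔥 →L[ℂ] 𝔥} (hd : d ∈ 𝔅d) (hsa : adjoint d = d)
    {t : (𝔥 →L[ℂ] H) ⊗[ℂ] 𝔥} (ht : t ∈ Submodule.span ℂ (genSet α)) :
    ‖Phi d t‖ ≤ ‖Phi 1 t‖ * ‖d‖ := by
  obtain ⟨K, hK, hcrude⟩ := Phi_crude t
  apply real_iter (norm_nonneg _) (norm_nonneg _) hK (norm_nonneg _)
  intro n
  have hiter := iter_bound hαα hcomm h𝔅dmul hd hsa ht n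
  have hstep : ‖Phi (d ^ (2 ^ n)) t‖ ≤ K * ‖d‖ ^ (2 ^ n) := by
    refine le_trans (hcrude _) ?_
    gcongr
    exact norm_pow_le' d (Nat.pos_of_ne_zero (by positivity))
  calc ‖Phi d t‖ ^ (2 ^ n) ≤ ‖Phi 1 t‖ ^ (2 ^ n - 1) * ‖Phi (d ^ (2 ^ n)) t‖ := hiter
    _ ≤ ‖Phi 1 t‖ ^ (2 ^ n - 1) * (K * ‖d‖ ^ (2 ^ n)) := by
        gcongr

lemma key_bound {𝔅 𝔅d : Set (𝔥 →L[ℂ] 𝔥)} {α : Set (𝔥 →L[ℂ] H)}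
    (hαα : clspan (Set.image2 (fun (ξ ξ' : 𝔥 →L[ℂ] H) => adjoint ξ ∘L ξ') α α) = 𝔅)
    (hcomm : ∀ b ∈ 𝔅, ∀ c ∈ 𝔅d, b ∘L c = c ∘L b)
    (h𝔅dmul : ∀ b ∈ 𝔅d, ∀ b' ∈ 𝔅d, b ∘L b' ∈ 𝔅d)
    (h𝔅dstar : ∀ b ∈ 𝔅d, adjoint b ∈ 𝔅d)
    {b : 𝔥 →L[ℂ] 𝔥} (hb : b ∈ 𝔅d)
    {t : (𝔥 →L[ℂ] H) ⊗[ℂ] 𝔥} (ht : t ∈ Submodule.span ℂ (genSet α)) :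
    ‖Phi b t‖ ≤ ‖b‖ * ‖Phi 1 t‖ := by
  have hb' := h𝔅dstar b hb
  have hcs := cs_step hαα hcomm hb' ht
  have hdd : adjoint b ∘L b ∈ 𝔅d := h𝔅dmul _ hb' _ hb
  have hdsa : adjoint (adjoint b ∘L b) = adjoint b ∘L b := by
    rw [adjoint_comp, adjoint_adjoint]
  have h2 := bound_sa hαα hcomm h𝔅dmul hdd hdsa ht
  have hnorm : ‖adjoint b ∘L b‖ = ‖b‖ * ‖b‖ := norm_adjoint_comp_self b
  rw [hnorm] at h2
  have hsq : ‖Phi b t‖ ^ 2 ≤ (‖b‖ * ‖Phi (1 : 𝔥 →L[ℂ] 𝔥) t‖) ^ 2 := by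
    nlinarith [norm_nonneg (Phi (1 : 𝔥 →L[ℂ] 𝔥) t), norm_nonneg b]
  exact (pow_le_pow_iff_left₀ (norm_nonneg _) (by positivity) two_ne_zero).1 hsq

lemma exists_R {𝔅 𝔅d : Set (𝔥 →L[ℂ] 𝔥)} {α : Set (𝔥 →L[ℂ] H)}
    (hαα : clspan (Set.image2 (fun (ξ ξ' : 𝔥 →L[ℂ] H) => adjoint ξ ∘L ξ') α α) = 𝔅)
    (hcomm : ∀ b ∈ 𝔅, ∀ c ∈ 𝔅d, b ∘L c = c ∘L b)
    (h𝔅dmul : ∀ b ∈ 𝔅d, ∀ b' ∈ 𝔅d, b ∘L b' ∈ 𝔅d)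
    (h𝔅dstar : ∀ b ∈ 𝔅d, adjoint b ∈ 𝔅d)
    (hα𝔥 : (Submodule.span ℂ {x : H | ∃ ξ ∈ α, ∃ ζ : 𝔥, ξ ζ = x}).topologicalClosure = ⊤)
    {b : 𝔥 →L[ℂ] 𝔥} (hb : b ∈ 𝔅d) :
    ∃ R : H →L[ℂ] H, ∀ ξ ∈ α, ∀ ζ : 𝔥, R (ξ ζ) = ξ (b ζ) := by
  classical
  set M₀ := Submodule.span ℂ {x : H | ∃ ξ ∈ α, ∃ ζ : 𝔥, ξ ζ = x} with hM₀
  have hbound : ∀ {t : (𝔥 →L[ℂ] H) ⊗[ℂ] 𝔥}, t ∈ Submodule.span ℂ (genSet α) →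
      ‖Phi b t‖ ≤ ‖b‖ * ‖Phi (1 : 𝔥 →L[ℂ] 𝔥) t‖ :=
    fun ht => key_bound hαα hcomm h𝔅dmul h𝔅dstar hb ht
  have surj : ∀ x ∈ M₀, ∃ t, t ∈ Submodule.span ℂ (genSet α) ∧
      Phi (1 : 𝔥 →L[ℂ] 𝔥) t = x := by
    intro x hx
    refine Submodule.span_induction (p := fun x _ => ∃ t, t ∈ Submodule.span ℂ (genSet α) ∧
        Phi (1 : 𝔥 →L[ℂ] 𝔥) t = x) ?_ ?_ ?_ ?_ hx
    · rintro y ⟨ξ, hξ, ζ, rfl⟩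
      exact ⟨ξ ⊗ₜ[ℂ] ζ, Submodule.subset_span ⟨ξ, hξ, ζ, rfl⟩, by simp⟩
    · exact ⟨0, Submodule.zero_mem _, by simp⟩
    · rintro u v _ _ ⟨t1, h1, e1⟩ ⟨t2, h2, e2⟩
      exact ⟨t1 + t2, Submodule.add_mem _ h1 h2, by rw [map_add, e1, e2]⟩
    · rintro a u _ ⟨t1, h1, e1⟩
      exact ⟨a • t1, Submodule.smul_mem _ a h1, by rw [map_smul, e1]⟩
  let f : M₀ → H := fun m => Phi b (surj m.1 m.2).choose
  have hwd : ∀ (x : H) (hx : x ∈ M₀) (t), t ∈ Submodule.span ℂ (genSet α) →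
      Phi (1 : 𝔥 →L[ℂ] 𝔥) t = x → f ⟨x, hx⟩ = Phi b t := by
    intro x hx t ht hte
    obtain ⟨ht0, hte0⟩ := (surj x hx).choose_spec
    have hsub : t - (surj x hx).choose ∈ Submodule.span ℂ (genSet α) :=
      Submodule.sub_mem _ ht ht0
    have h0 : Phi (1 : 𝔥 →L[ℂ] 𝔥) (t - (surj x hx).choose) = 0 := by
      rw [map_sub, hte, hte0, sub_self]
    have hb1 := hbound hsub
    rw [h0, norm_zero, mul_zero] at hb1
    have hz : Phi b t - Phi b (surj x hx).choose = 0 := by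
      rw [← map_sub]
      exact norm_le_zero_iff.1 hb1
    have := sub_eq_zero.1 hz
    simpa only [f] using this.symm
  let F : M₀ →ₗ[ℂ] H :=
    { toFun := f
      map_add' := by
        rintro ⟨x, hx⟩ ⟨y, hy⟩
        obtain ⟨tx, htx, hex⟩ := surj x hx
        obtain ⟨ty, hty, hey⟩ := surj y hy
        have e1 := hwd x hx tx htx hex
        have e2 := hwd y hy ty hty hey
        have e3 := hwd (x + y) (Submodule.add_mem _ hx hy) (tx + ty)
          (Submodule.add_mem _ htx hty) (by rw [map_add, hex, hey])
        calc f (⟨x, hx⟩ + ⟨y, hy⟩) = Phi b (tx + ty) := e3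
          _ = Phi b tx + Phi b ty := map_add _ _ _
          _ = f ⟨x, hx⟩ + f ⟨y, hy⟩ := by rw [e1, e2]
      map_smul' := by
        rintro a ⟨x, hx⟩
        obtain ⟨tx, htx, hex⟩ := surj x hx
        have e1 := hwd x hx tx htx hex
        have e3 := hwd (a • x) (Submodule.smul_mem _ a hx) (a • tx)
          (Submodule.smul_mem _ a htx) (by rw [map_smul, hex])
        calc f (a • ⟨x, hx⟩) = Phi b (a • tx) := e3
          _ = a • Phi b tx := map_smul _ _ _
          _ = a • f ⟨x, hx⟩ := by rw [e1] }
  have hFb : ∀ m : M₀, ‖F m‖ ≤ ‖b‖ * ‖m‖ := by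
    rintro ⟨x, hx⟩
    obtain ⟨t, ht, hte⟩ := surj x hx
    have hwd' := hwd x hx t ht hte
    have hk := hbound ht
    rw [hte] at hk
    calc ‖F ⟨x, hx⟩‖ = ‖Phi b t‖ := by rw [show F ⟨x, hx⟩ = f ⟨x, hx⟩ from rfl, hwd']
      _ ≤ ‖b‖ * ‖x‖ := hk
      _ = ‖b‖ * ‖(⟨x, hx⟩ : M₀)‖ := rfl
  let Fc : M₀ →L[ℂ] H := F.mkContinuous ‖b‖ hFb
  have hdense : Dense (M₀ : Set H) :=
    Submodule.dense_iff_topologicalClosure_eq_top.mpr hα𝔥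
  let R : H →L[ℂ] H := Fc.extend M₀.subtypeL
  refine ⟨R, ?_⟩
  intro ξ hξ ζ
  have hmem : ξ ζ ∈ M₀ := Submodule.subset_span ⟨ξ, hξ, ζ, rfl⟩
  have he : R (ξ ζ) = Fc ⟨ξ ζ, hmem⟩ :=
    ContinuousLinearMap.extend_eq Fc hdense.denseRange_val
      isUniformEmbedding_subtype_val.isUniformInducing ⟨ξ ζ, hmem⟩
  rw [he]
  have : Fc ⟨ξ ζ, hmem⟩ = f ⟨ξ ζ, hmem⟩ := rfl
  rw [this, hwd (ξ ζ) hmem (ξ ⊗ₜ[ℂ] ζ)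
    (Submodule.subset_span ⟨ξ, hξ, ζ, rfl⟩) (by simp)]
  simp

end Main

set_option maxHeartbeats 1600000 in
/-- Let `(𝔥,𝔅,𝔅†)` be a C*-base and `α` a C*-factorization of `H` with
respect to it.  Then there is a unique map `ρ_α : 𝔅† → L(H)` with
`ρ_α(b†)(ξζ) = ξ(b†ζ)` for `b† ∈ 𝔅†, ξ ∈ α, ζ ∈ 𝔥`; it is a (linear, multiplicative,
star-preserving) representation, and it is faithful and nondegenerate. -/
theorem stmt5
    {𝔥 H : Type*} [NormedAddCommGroup 𝔥] [InnerProductSpace ℂ 𝔥] [CompleteSpace 𝔥]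
    [NormedAddCommGroup H] [InnerProductSpace ℂ H] [CompleteSpace H]
    (𝔅 𝔅d : Set (𝔥 →L[ℂ] 𝔥))
    -- `𝔅` and `𝔅†` are C*-subalgebras of `L(𝔥)`:
    (h𝔅closed : clspan 𝔅 = 𝔅) (h𝔅mul : ∀ b ∈ 𝔅, ∀ b' ∈ 𝔅, b ∘L b' ∈ 𝔅)
    (h𝔅star : ∀ b ∈ 𝔅, adjoint b ∈ 𝔅)
    (h𝔅dclosed : clspan 𝔅d = 𝔅d) (h𝔅dmul : ∀ b ∈ 𝔅d, ∀ b' ∈ 𝔅d, b ∘L b' ∈ 𝔅d)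
    (h𝔅dstar : ∀ b ∈ 𝔅d, adjoint b ∈ 𝔅d)
    -- they commute and are nondegenerate:
    (hcomm : ∀ b ∈ 𝔅, ∀ c ∈ 𝔅d, b ∘L c = c ∘L b)
    (h𝔅nd : (Submodule.span ℂ {x : 𝔥 | ∃ b ∈ 𝔅, ∃ ζ : 𝔥, b ζ = x}).topologicalClosure = ⊤)
    (h𝔅dnd : (Submodule.span ℂ {x : 𝔥 | ∃ b ∈ 𝔅d, ∃ ζ : 𝔥, b ζ = x}).topologicalClosure = ⊤)
    -- `α` is a C*-factorization of `H` with respect to `(𝔥,𝔅,𝔅†)`: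
    (α : Set (𝔥 →L[ℂ] H))
    (hαclosed : clspan α = α)
    (hαα : clspan (Set.image2 (fun (ξ ξ' : 𝔥 →L[ℂ] H) => adjoint ξ ∘L ξ') α α) = 𝔅)
    (hα𝔅 : clspan (Set.image2 (fun (ξ : 𝔥 →L[ℂ] H) (b : 𝔥 →L[ℂ] 𝔥) => ξ ∘L b) α 𝔅) = α)
    (hα𝔥 : (Submodule.span ℂ {x : H | ∃ ξ ∈ α, ∃ ζ : 𝔥, ξ ζ = x}).topologicalClosure = ⊤) :
    ∃ ρ : (𝔥 →L[ℂ] 𝔥) → (H →L[ℂ] H),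
      -- defining property
      (∀ b ∈ 𝔅d, ∀ ξ ∈ α, ∀ ζ : 𝔥, ρ b (ξ ζ) = ξ (b ζ)) ∧
      -- uniqueness: any map with the defining property agrees with `ρ` on `𝔅†`
      (∀ ρ' : (𝔥 →L[ℂ] 𝔥) → (H →L[ℂ] H),
        (∀ b ∈ 𝔅d, ∀ ξ ∈ α, ∀ ζ : 𝔥, ρ' b (ξ ζ) = ξ (b ζ)) → ∀ b ∈ 𝔅d, ρ' b = ρ b) ∧
      -- `ρ` is a representation on `𝔅†`: additive, homogeneous, multiplicative, star-preserving
      (∀ b ∈ 𝔅d, ∀ b' ∈ 𝔅d, ρ (b + b') = ρ b + ρ b') ∧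
      (∀ b ∈ 𝔅d, ∀ c : ℂ, ρ (c • b) = c • ρ b) ∧
      (∀ b ∈ 𝔅d, ∀ b' ∈ 𝔅d, ρ (b ∘L b') = ρ b ∘L ρ b') ∧
      (∀ b ∈ 𝔅d, ρ (adjoint b) = adjoint (ρ b)) ∧
      -- faithful
      (∀ b ∈ 𝔅d, ρ b = 0 → b = 0) ∧
      -- nondegenerate
      ((Submodule.span ℂ {x : H | ∃ b ∈ 𝔅d, ∃ y : H, ρ b y = x}).topologicalClosure = ⊤) := by
  classical
  have hdense : Dense (↑(Submodule.span ℂ {x : H | ∃ ξ ∈ α, ∃ ζ : 𝔥, ξ ζ = x}) : Set H) :=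
    Submodule.dense_iff_topologicalClosure_eq_top.mpr hα𝔥
  have hex : ∀ b : 𝔥 →L[ℂ] 𝔥, b ∈ 𝔅d → ∃ R : H →L[ℂ] H, ∀ ξ ∈ α, ∀ ζ : 𝔥, R (ξ ζ) = ξ (b ζ) :=
    fun b hb => exists_R hαα hcomm h𝔅dmul h𝔅dstar hα𝔥 hb
  set ρ : (𝔥 →L[ℂ] 𝔥) → (H →L[ℂ] H) :=
    fun b => if h : b ∈ 𝔅d then (hex b h).choose else 0 with hρdef
  have hprop : ∀ b ∈ 𝔅d, ∀ ξ ∈ α, ∀ ζ : 𝔥, ρ b (ξ ζ) = ξ (b ζ) := by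
    intro b hb ξ hξ ζ
    have := (hex b hb).choose_spec ξ hξ ζ
    simpa only [hρdef, dif_pos hb] using this
  have hext : ∀ (A B : H →L[ℂ] H), (∀ ξ ∈ α, ∀ ζ : 𝔥, A (ξ ζ) = B (ξ ζ)) → A = B := by
    intro A B hAB
    refine ContinuousLinearMap.ext_on hdense ?_
    rintro x ⟨ξ, hξ, ζ, rfl⟩
    exact hAB ξ hξ ζ
  have huniq : ∀ ρ' : (𝔥 →L[ℂ] 𝔥) → (H →L[ℂ] H),
      (∀ b ∈ 𝔅d, ∀ ξ ∈ α, ∀ ζ : 𝔥, ρ' b (ξ ζ) = ξ (b ζ)) → ∀ b ∈ 𝔅d, ρ' b = ρ b :=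
    fun ρ' hp b hb => hext _ _ (fun ξ hξ ζ => by
      rw [hp b hb ξ hξ ζ, hprop b hb ξ hξ ζ])
  have hmemadd : ∀ b ∈ 𝔅d, ∀ b' ∈ 𝔅d, b + b' ∈ 𝔅d := fun b hb b' hb' =>
    clspan_subset' h𝔅dclosed
      (Submodule.add_mem _ (Submodule.subset_span hb) (Submodule.subset_span hb'))
  have hmemsmul : ∀ b ∈ 𝔅d, ∀ c : ℂ, c • b ∈ 𝔅d := fun b hb c =>
    clspan_subset' h𝔅dclosed (Submodule.smul_mem _ c (Submodule.subset_span hb))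
  refine ⟨ρ, hprop, huniq, ?_, ?_, ?_, ?_, ?_, ?_⟩
  · -- additive
    intro b hb b' hb'
    refine hext _ _ (fun ξ hξ ζ => ?_)
    rw [hprop _ (hmemadd b hb b' hb') ξ hξ ζ]
    simp only [ContinuousLinearMap.add_apply, hprop b hb ξ hξ ζ, hprop b' hb' ξ hξ ζ]
    rw [← map_add]
  · -- homogeneous
    intro b hb c
    refine hext _ _ (fun ξ hξ ζ => ?_)
    rw [hprop _ (hmemsmul b hb c) ξ hξ ζ, ContinuousLinearMap.smul_apply,
      ContinuousLinearMap.smul_apply, hprop b hb ξ hξ ζ, map_smul]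
  · -- multiplicative
    intro b hb b' hb'
    refine hext _ _ (fun ξ hξ ζ => ?_)
    rw [hprop _ (h𝔅dmul b hb b' hb') ξ hξ ζ]
    simp only [ContinuousLinearMap.comp_apply]
    rw [hprop b' hb' ξ hξ ζ, hprop b hb ξ hξ (b' ζ)]
  · -- star-preserving
    intro b hb
    refine (ContinuousLinearMap.eq_adjoint_iff (ρ (adjoint b)) (ρ b)).2 ?_
    have step1 : ∀ ξ ∈ α, ∀ ζ : 𝔥, ∀ y : H,
        ⟪ρ (adjoint b) (ξ ζ), y⟫_ℂ = ⟪ξ ζ, ρ b y⟫_ℂ := by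
      intro ξ hξ ζ
      have hA : innerSL ℂ (ρ (adjoint b) (ξ ζ)) = (innerSL ℂ (ξ ζ)).comp (ρ b) := by
        refine ContinuousLinearMap.ext_on hdense ?_
        rintro y ⟨ξ', hξ', ζ', rfl⟩
        have hmemB : adjoint ξ ∘L ξ' ∈ 𝔅 := by
          rw [← hαα]
          exact subset_clspan _ (Set.mem_image2_of_mem hξ hξ')
        have hcm := hcomm _ hmemB _ hb
        have hcm' : b ((adjoint ξ) (ξ' ζ')) = (adjoint ξ) (ξ' (b ζ')) := by
          have := congrArg (fun (T : 𝔥 →L[ℂ] 𝔥) => T ζ') hcm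
          simpa using this.symm
        show ⟪ρ (adjoint b) (ξ ζ), ξ' ζ'⟫_ℂ = ⟪ξ ζ, ρ b (ξ' ζ')⟫_ℂ
        rw [hprop _ (h𝔅dstar b hb) ξ hξ ζ, hprop b hb ξ' hξ' ζ']
        calc ⟪ξ ((adjoint b) ζ), ξ' ζ'⟫_ℂ
            = ⟪(adjoint b) ζ, adjoint ξ (ξ' ζ')⟫_ℂ := (adjoint_inner_right ξ _ _).symm
          _ = ⟪ζ, b (adjoint ξ (ξ' ζ'))⟫_ℂ := adjoint_inner_left b _ _
          _ = ⟪ζ, adjoint ξ (ξ' (b ζ'))⟫_ℂ := by rw [hcm']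
          _ = ⟪ξ ζ, ξ' (b ζ')⟫_ℂ := adjoint_inner_right ξ _ _
      intro y
      have := congrArg (fun (T : H →L[ℂ] ℂ) => T y) hA
      simpa using this
    intro x y
    have step2 : innerSL ℂ (ρ b y) = (innerSL ℂ y).comp (ρ (adjoint b)) := by
      refine ContinuousLinearMap.ext_on hdense ?_
      rintro x ⟨ξ, hξ, ζ, rfl⟩
      show ⟪ρ b y, ξ ζ⟫_ℂ = ⟪y, ρ (adjoint b) (ξ ζ)⟫_ℂ
      have := step1 ξ hξ ζ y
      calc ⟪ρ b y, ξ ζ⟫_ℂ = (starRingEnd ℂ) ⟪ξ ζ, ρ b y⟫_ℂ := (inner_conj_symm _ _).symm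
        _ = (starRingEnd ℂ) ⟪ρ (adjoint b) (ξ ζ), y⟫_ℂ := by rw [this]
        _ = ⟪y, ρ (adjoint b) (ξ ζ)⟫_ℂ := inner_conj_symm _ _
    have := congrArg (fun (T : H →L[ℂ] ℂ) => T x) step2
    simp only [ContinuousLinearMap.comp_apply, innerSL_apply_apply] at this
    calc ⟪ρ (adjoint b) x, y⟫_ℂ = (starRingEnd ℂ) ⟪y, ρ (adjoint b) x⟫_ℂ :=
          (inner_conj_symm _ _).symm
      _ = (starRingEnd ℂ) ⟪ρ b y, x⟫_ℂ := by rw [← this]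
      _ = ⟪x, ρ b y⟫_ℂ := inner_conj_symm _ _
  · -- faithful
    intro b hb hρ0
    have hξb : ∀ ξ ∈ α, ξ ∘L b = 0 := by
      intro ξ hξ
      ext ζ
      have := hprop b hb ξ hξ ζ
      rw [hρ0] at this
      simpa using this.symm
    have hcb : ∀ c ∈ 𝔅, c ∘L b = 0 := by
      intro c hc
      set T : (𝔥 →L[ℂ] 𝔥) →L[ℂ] (𝔥 →L[ℂ] 𝔥) := (ContinuousLinearMap.compL ℂ 𝔥 𝔥 𝔥).flip b
        with hT
      have hTc : ∀ c' : 𝔥 →L[ℂ] 𝔥, T c' = c' ∘L b := fun c' => rfl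
      have hSsub : Set.image2 (fun (ξ ξ' : 𝔥 →L[ℂ] H) => adjoint ξ ∘L ξ') α α ⊆
          (T.ker : Set (𝔥 →L[ℂ] 𝔥)) := by
        rintro _ ⟨ξ, hξ, ξ', hξ', rfl⟩
        show adjoint ξ ∘L ξ' ∈ (T.ker : Set (𝔥 →L[ℂ] 𝔥))
        rw [SetLike.mem_coe, LinearMap.mem_ker, ContinuousLinearMap.coe_coe, hTc, ContinuousLinearMap.comp_assoc,
          hξb ξ' hξ', ContinuousLinearMap.comp_zero]
      have hker : 𝔅 ⊆ (T.ker : Set (𝔥 →L[ℂ] 𝔥)) := by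
        rw [← hαα]
        unfold clspan
        rw [Submodule.topologicalClosure_coe]
        calc closure (↑(Submodule.span ℂ (Set.image2 (fun (ξ ξ' : 𝔥 →L[ℂ] H) => adjoint ξ ∘L ξ') α α)) : Set (𝔥 →L[ℂ] 𝔥))
            ⊆ closure (T.ker : Set (𝔥 →L[ℂ] 𝔥)) := by
              apply closure_mono
              exact fun z hz => Submodule.span_le.2 hSsub hz
          _ = (T.ker : Set (𝔥 →L[ℂ] 𝔥)) := (ContinuousLinearMap.isClosed_ker T).closure_eq
      have := hker hc
      rw [SetLike.mem_coe, LinearMap.mem_ker, ContinuousLinearMap.coe_coe, hTc] at this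
      exact this
    have hb0 : ∀ c ∈ 𝔅, b ∘L c = 0 := fun c hc => by
      rw [← hcomm c hc b hb]
      exact hcb c hc
    ext x
    have hle : (Submodule.span ℂ {x : 𝔥 | ∃ c ∈ 𝔅, ∃ ζ : 𝔥, c ζ = x}).topologicalClosure ≤
        b.ker := by
      apply Submodule.topologicalClosure_minimal
      · rw [Submodule.span_le]
        rintro _ ⟨c, hc, ζ, rfl⟩
        rw [SetLike.mem_coe, LinearMap.mem_ker]
        have := congrArg (fun (S : 𝔥 →L[ℂ] 𝔥) => S ζ) (hb0 c hc)
        simpa using this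
      · exact ContinuousLinearMap.isClosed_ker b
    have hx : x ∈ b.ker := hle (by rw [h𝔅nd]; trivial)
    rw [LinearMap.mem_ker] at hx
    simpa using hx
  · -- nondegenerate
    rw [← top_le_iff, ← hα𝔥]
    set N := Submodule.span ℂ {x : H | ∃ b ∈ 𝔅d, ∃ y : H, ρ b y = x} with hN
    apply Submodule.topologicalClosure_minimal
    · rw [Submodule.span_le]
      rintro _ ⟨ξ, hξ, ζ, rfl⟩
      set D : Set 𝔥 := {x : 𝔥 | ∃ b ∈ 𝔅d, ∃ w : 𝔥, b w = x} with hD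
      have hmap : Submodule.map (ξ : 𝔥 →ₗ[ℂ] H) (Submodule.span ℂ D) ≤ N := by
        rw [Submodule.map_span]
        refine Submodule.span_le.2 ?_
        rintro _ ⟨_, ⟨bb, hbb, w, rfl⟩, rfl⟩
        exact Submodule.subset_span ⟨bb, hbb, ξ w, hprop bb hbb ξ hξ w⟩
      have hζc : ζ ∈ closure (↑(Submodule.span ℂ D) : Set 𝔥) := by
        have hζ' : ζ ∈ (Submodule.span ℂ D).topologicalClosure := by
          rw [hD, h𝔅dnd]
          trivial
        rwa [← Submodule.topologicalClosure_coe]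
      have h1 : ξ ζ ∈ closure ((ξ : 𝔥 → H) '' ↑(Submodule.span ℂ D)) :=
        image_closure_subset_closure_image ξ.continuous (Set.mem_image_of_mem _ hζc)
      have h2 : ((ξ : 𝔥 → H) '' ↑(Submodule.span ℂ D)) ⊆ (N : Set H) := by
        rintro _ ⟨z, hz, rfl⟩
        exact hmap ⟨z, hz, rfl⟩
      have h3 : ξ ζ ∈ closure (↑N : Set H) := closure_mono h2 h1
      show ξ ζ ∈ N.topologicalClosure
      rw [← SetLike.mem_coe, Submodule.topologicalClosure_coe]
      exact h3
    · exact Submodule.isClosed_topologicalClosure _
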